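/- The closure in L²(∂Ω) of the domain D(𝔟) = Tr(V) = { Tr u : u ∈ W^{1,2}(Ω), Tr u = 0 on Γ_0 } equals L²(Γ_1) ⊕ {0}, i.e., the set of L² functions on ∂Ω vanishing a.e. on Γ_0. -/

import Mathlib

/- STATEMENT 6: The closure in `L²(∂Ω)` of `D(𝔟) = Tr(V) = {Tr u : u ∈ W^{1,2}(Ω), Tr u = 0 on Γ₀}`
equals `L²(Γ₁) ⊕ {0}`, i.e. the set of `L²` functions on `∂Ω` vanishing a.e. on `Γ₀`.

The boundary `∂Ω` of the bounded Lipschitz domain is formalized as a compact subset `B` of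
`ℝ^d` carrying the finite regular Borel measure `σ` (the `(d−1)`-dimensional Hausdorff
measure); `Γ₀ ⊆ B` is closed and `Γ₁ = B \ Γ₀`. The trace space `D = Tr(V)` is a subspace
of `L²(B, σ)` whose elements vanish a.e. on `Γ₀`, and which contains (the class of) the
restriction to `B` of every bounded Lipschitz function `u ∈ W^{1,∞}(ℝ^d)` vanishing on `Γ₀`
(these restrictions are traces of elements of `V`, as in the paper's proof). -/

open MeasureTheory Metric Filter
open scoped NNReal ENNReal Topology



lemma lipschitzWith_mul_of_bounded' {E : Type*} [PseudoMetricSpace E] {R : Type*} [NormedRing R]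
    {u v : E → R} {Ku Kv : ℝ≥0} {cu cv : ℝ} (hu : LipschitzWith Ku u) (hv : LipschitzWith Kv v)
    (hbu : ∀ x, ‖u x‖ ≤ cu) (hbv : ∀ x, ‖v x‖ ≤ cv) :
    LipschitzWith (cu.toNNReal * Kv + cv.toNNReal * Ku) (fun x => u x * v x) := by
  apply LipschitzWith.of_dist_le_mul
  intro x y
  have key : u x * v x - u y * v y = u x * (v x - v y) + (u x - u y) * v y := by rw [mul_sub, sub_mul]; abel
  rw [dist_eq_norm, key]
  have h1 : ‖u x * (v x - v y)‖ ≤ (cu.toNNReal : ℝ) * (Kv * dist x y) := by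
    refine (norm_mul_le _ _).trans ?_
    refine mul_le_mul ((hbu x).trans (Real.le_coe_toNNReal cu)) ?_ (norm_nonneg _)
      cu.toNNReal.coe_nonneg
    rw [← dist_eq_norm]
    exact hv.dist_le_mul x y
  have h2 : ‖(u x - u y) * v y‖ ≤ (cv.toNNReal : ℝ) * (Ku * dist x y) := by
    refine (norm_mul_le _ _).trans ?_
    rw [mul_comm]
    refine mul_le_mul ((hbv y).trans (Real.le_coe_toNNReal cv)) ?_ (norm_nonneg _)
      cv.toNNReal.coe_nonneg
    rw [← dist_eq_norm]
    exact hu.dist_le_mul x y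
  calc ‖u x * (v x - v y) + (u x - u y) * v y‖
      ≤ ‖u x * (v x - v y)‖ + ‖(u x - u y) * v y‖ := norm_add_le _ _
    _ ≤ (cu.toNNReal : ℝ) * (Kv * dist x y) + (cv.toNNReal : ℝ) * (Ku * dist x y) :=
        add_le_add h1 h2
    _ = ((cu.toNNReal * Kv + cv.toNNReal * Ku : ℝ≥0) : ℝ) * dist x y := by push_cast; ring

/-- The subalgebra of `C(B, ℝ)` of restrictions of bounded globally Lipschitz functions. -/
noncomputable def lipSubalgebra {d : ℕ} (B : Set (EuclideanSpace ℝ (Fin d))) :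
    Subalgebra ℝ C(B, ℝ) where
  carrier := {f | ∃ (u : EuclideanSpace ℝ (Fin d) → ℝ) (L : ℝ≥0) (c : ℝ),
    LipschitzWith L u ∧ (∀ x, |u x| ≤ c) ∧ ∀ x : B, f x = u x}
  add_mem' := by
    rintro f g ⟨u, Lu, cu, hu, hbu, hfu⟩ ⟨v, Lv, cv, hv, hbv, hgv⟩
    exact ⟨u + v, Lu + Lv, cu + cv, hu.add hv,
      fun x => (abs_add_le _ _).trans (add_le_add (hbu x) (hbv x)),
      fun x => by simp [hfu x, hgv x]⟩
  mul_mem' := by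
    rintro f g ⟨u, Lu, cu, hu, hbu, hfu⟩ ⟨v, Lv, cv, hv, hbv, hgv⟩
    refine ⟨fun x => u x * v x, _, cu * cv, lipschitzWith_mul_of_bounded' hu hv
      (by simpa using hbu) (by simpa using hbv), fun x => ?_, fun x => by simp [hfu x, hgv x]⟩
    rw [abs_mul]
    have h0 : (0:ℝ) ≤ cu := le_trans (abs_nonneg _) (hbu x)
    exact mul_le_mul (hbu x) (hbv x) (abs_nonneg _) h0
  algebraMap_mem' := fun r =>
    ⟨fun _ => r, 0, |r|, LipschitzWith.const r, fun _ => le_rfl, fun _ => rfl⟩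

lemma lipSubalgebra_separatesPoints {d : ℕ} (B : Set (EuclideanSpace ℝ (Fin d))) :
    (lipSubalgebra B).SeparatesPoints := by
  intro x y hxy
  have hne : (x : EuclideanSpace ℝ (Fin d)) ≠ (y : EuclideanSpace ℝ (Fin d)) :=
    fun h => hxy (Subtype.ext h)
  set c : ℝ := dist (y : EuclideanSpace ℝ (Fin d)) (x : EuclideanSpace ℝ (Fin d)) with hc
  have hcpos : 0 < c := dist_pos.2 (Ne.symm hne)
  set u : EuclideanSpace ℝ (Fin d) → ℝ := fun z => min (dist z (x : EuclideanSpace ℝ (Fin d))) c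
    with hu
  have hlip : LipschitzWith 1 u := (LipschitzWith.dist_left _).min_const c
  refine ⟨fun z : B => u z, ⟨ContinuousMap.mk (fun z : B => u z)
    (by fun_prop), ⟨u, 1, c, hlip, fun z => ?_, fun z => rfl⟩, rfl⟩, ?_⟩
  · rw [abs_le]
    constructor
    · have : (0:ℝ) ≤ u z := le_min dist_nonneg hcpos.le
      linarith
    · exact min_le_right _ _
  · simp only [hu]
    rw [dist_self]
    rw [min_eq_left hcpos.le, min_self]
    exact hcpos.ne


lemma lipSubalgebra_mem {d : ℕ} (B : Set (EuclideanSpace ℝ (Fin d))) (f : C(B, ℝ)) :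
    f ∈ lipSubalgebra B ↔ ∃ (u : EuclideanSpace ℝ (Fin d) → ℝ) (L : ℝ≥0) (c : ℝ),
    LipschitzWith L u ∧ (∀ x, |u x| ≤ c) ∧ ∀ x : B, f x = u x := Iff.rfl

lemma exists_lip_unif {d : ℕ} {B : Set (EuclideanSpace ℝ (Fin d))} [CompactSpace B]
    (g : B → ℂ) (hg : Continuous g) {δ : ℝ} (hδ : 0 < δ) :
    ∃ (u : EuclideanSpace ℝ (Fin d) → ℂ) (L : ℝ≥0) (c : ℝ),
      LipschitzWith L u ∧ (∀ x, ‖u x‖ ≤ c) ∧ ∀ x : B, ‖g x - u x‖ < δ := by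
  obtain ⟨ar, har⟩ := ContinuousMap.exists_mem_subalgebra_near_continuous_of_separatesPoints
    (lipSubalgebra B) (lipSubalgebra_separatesPoints B) (fun x => (g x).re) (by fun_prop) (δ/2) (by positivity)
  obtain ⟨ai, hai⟩ := ContinuousMap.exists_mem_subalgebra_near_continuous_of_separatesPoints
    (lipSubalgebra B) (lipSubalgebra_separatesPoints B) (fun x => (g x).im) (by fun_prop) (δ/2) (by positivity)
  obtain ⟨ur, Lr, cr, hur, hbr, hfr⟩ := (lipSubalgebra_mem B ar).1 ar.2
  obtain ⟨ui, Li, ci, hui, hbi, hfi⟩ := (lipSubalgebra_mem B ai).1 ai.2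
  have hI : LipschitzWith 1 (fun z : ℂ => z * Complex.I) := by
    apply LipschitzWith.of_dist_le_mul
    intro a b
    rw [dist_eq_norm, dist_eq_norm, ← sub_mul, norm_mul, Complex.norm_I, mul_one, NNReal.coe_one,
      one_mul]
  refine ⟨fun z => (ur z : ℂ) + (ui z : ℂ) * Complex.I, 1 * Lr + 1 * (1 * Li), cr + ci,
    ((Complex.isometry_ofReal.lipschitz.comp hur).add
      (hI.comp (Complex.isometry_ofReal.lipschitz.comp hui))), fun z => ?_, fun x => ?_⟩
  · refine (norm_add_le _ _).trans ?_
    rw [norm_mul, Complex.norm_I, mul_one, Complex.norm_real, Complex.norm_real]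
    exact add_le_add (hbr z) (hbi z)
  · have hre : (g x - ((ur x : ℂ) + (ui x : ℂ) * Complex.I)).re = (g x).re - ur x := by simp
    have him : (g x - ((ur x : ℂ) + (ui x : ℂ) * Complex.I)).im = (g x).im - ui x := by simp
    calc ‖g x - ((ur x : ℂ) + (ui x : ℂ) * Complex.I)‖
        ≤ |(g x - ((ur x : ℂ) + (ui x : ℂ) * Complex.I)).re| +
          |(g x - ((ur x : ℂ) + (ui x : ℂ) * Complex.I)).im| :=
          Complex.norm_le_abs_re_add_abs_im _
      _ = |(g x).re - ur x| + |(g x).im - ui x| := by rw [hre, him]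
      _ < δ/2 + δ/2 := by
          have h1 := har x
          have h2 := hai x
          rw [hfr x] at h1
          rw [hfi x] at h2
          rw [Real.norm_eq_abs, abs_sub_comm] at h1 h2
          exact add_lt_add h1 h2
      _ = δ := by ring

lemma exists_lip_approx {d : ℕ} {B : Set (EuclideanSpace ℝ (Fin d))} [CompactSpace B]
    (σ : Measure B) [IsFiniteMeasure σ] [σ.Regular] (φ : Lp ℂ 2 σ) {η : ℝ≥0∞} (hη : η ≠ 0) :
    ∃ (u : EuclideanSpace ℝ (Fin d) → ℂ) (L : ℝ≥0) (c : ℝ), LipschitzWith L u ∧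
      (∀ x, ‖u x‖ ≤ c) ∧
      eLpNorm ((φ : B → ℂ) - fun x : B => u x) 2 σ ≤ η := by
  set η' : ℝ≥0∞ := min η 1 with hη'
  have hη'0 : η' ≠ 0 :=
    (lt_min (pos_iff_ne_zero.mpr hη) zero_lt_one).ne'
  have hη'2top : η' / 2 ≠ ∞ := (ENNReal.div_lt_top (by simp [hη']) (by norm_num)).ne
  have hη'top : η' ≠ ∞ := by simp [hη']
  have hη'2 : η' / 2 ≠ 0 := by simp [ENNReal.div_eq_zero_iff, hη'0]
  obtain ⟨g, hg, hgmem⟩ := (Lp.memLp φ).exists_boundedContinuous_eLpNorm_sub_le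
    (by norm_num : (2:ℝ≥0∞) ≠ ∞) hη'2
  set M : ℝ≥0∞ := σ Set.univ ^ (2:ℝ≥0∞).toReal⁻¹ with hM
  have hMtop : M ≠ ∞ := by
    apply ENNReal.rpow_ne_top_of_nonneg (by norm_num)
    exact (measure_lt_top σ _).ne
  set δ : ℝ := ((η'/2) / (M + 1)).toReal with hδdef
  have hδpos : 0 < δ := by
    apply ENNReal.toReal_pos
    · rw [ne_eq, ENNReal.div_eq_zero_iff]
      push_neg
      exact ⟨hη'2, by simp [hMtop]⟩
    · exact (ENNReal.div_lt_top hη'2top (by simp)).ne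
  obtain ⟨u, L, c, hLu, hbu, happrox⟩ := exists_lip_unif (fun x : B => g x) g.continuous hδpos
  refine ⟨u, L, c, hLu, hbu, ?_⟩
  have hsub : eLpNorm ((fun x : B => g x) - fun x : B => u x) 2 σ ≤ η' / 2 := by
    have := eLpNorm_le_of_ae_bound (μ := σ) (p := 2)
      (f := (fun x : B => g x) - fun x : B => u x) (C := δ)
      (Filter.Eventually.of_forall fun x => (happrox x).le)
    refine this.trans ?_
    rw [← hM]
    have : ENNReal.ofReal δ = (η'/2) / (M + 1) := by
      rw [hδdef, ENNReal.ofReal_toReal]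
      exact (ENNReal.div_lt_top hη'2top (by simp)).ne
    rw [this]
    calc M * ((η'/2) / (M + 1)) ≤ (M + 1) * ((η'/2) / (M + 1)) := by
          gcongr; exact le_self_add
      _ = η' / 2 := ENNReal.mul_div_cancel' (by simp) (by simp [hMtop])
  calc eLpNorm ((φ : B → ℂ) - fun x : B => u x) 2 σ
      ≤ eLpNorm ((φ : B → ℂ) - fun x : B => g x) 2 σ +
        eLpNorm ((fun x : B => g x) - fun x : B => u x) 2 σ := by
        have h1 : ((φ : B → ℂ) - fun x : B => u x) =
            (((φ : B → ℂ) - fun x : B => g x) + ((fun x : B => g x) - fun x : B => u x)) := by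
          funext x; simp
        rw [h1]
        exact eLpNorm_add_le ((Lp.aestronglyMeasurable φ).sub
          (g.continuous.aestronglyMeasurable))
          ((g.continuous.aestronglyMeasurable).sub
            ((hLu.continuous.comp continuous_subtype_val).aestronglyMeasurable))
          (by norm_num)
    _ ≤ η'/2 + η'/2 := add_le_add hg hsub
    _ = η' := ENNReal.add_halves _
    _ ≤ η := min_le_left _ _

theorem closure_of_trace_space_eq_L2_Gamma1
    {d : ℕ} (B : Set (EuclideanSpace ℝ (Fin d))) (hB : IsCompact B) [CompactSpace B]
    (σ : Measure B) [IsFiniteMeasure σ] [σ.Regular]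
    (Γ₀ : Set B) (hΓ₀ : IsClosed Γ₀) (hΓ₀ne : Γ₀ ≠ Set.univ)
    (D : Submodule ℂ (Lp ℂ 2 σ))
    -- every element of `D = Tr(V)` vanishes a.e. on `Γ₀`:
    (hvanish : ∀ φ ∈ D, ∀ᵐ x ∂σ, x ∈ Γ₀ → (φ : B → ℂ) x = 0)
    -- `D` contains the boundary restrictions of bounded Lipschitz functions vanishing on `Γ₀`:
    (hlip : ∀ (u : EuclideanSpace ℝ (Fin d) → ℂ) (L : NNReal), LipschitzWith L u →
      (∃ c : ℝ, ∀ x, ‖u x‖ ≤ c) → (∀ x : B, x ∈ Γ₀ → u x = 0) →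
      ∀ φ : Lp ℂ 2 σ, ((φ : B → ℂ) =ᵐ[σ] fun x : B => u x) → φ ∈ D) :
    closure (D : Set (Lp ℂ 2 σ)) =
      {φ : Lp ℂ 2 σ | ∀ᵐ x ∂σ, x ∈ Γ₀ → (φ : B → ℂ) x = 0} := by
  apply Set.Subset.antisymm
  · -- closure D ⊆ S
    refine closure_minimal (fun φ hφ => hvanish φ hφ) ?_
    apply IsSeqClosed.isClosed
    intro ψ φ hψ hlim
    have h1 : TendstoInMeasure σ (fun n => ((ψ n : Lp ℂ 2 σ) : B → ℂ)) atTop (φ : B → ℂ) :=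
      tendstoInMeasure_of_tendsto_Lp hlim
    obtain ⟨ns, _, hae⟩ := h1.exists_seq_tendsto_ae
    have h2 : ∀ᵐ x ∂σ, ∀ n, x ∈ Γ₀ → ((ψ n : Lp ℂ 2 σ) : B → ℂ) x = 0 :=
      ae_all_iff.mpr fun n => hψ n
    filter_upwards [hae, h2] with x hx1 hx2 hxΓ
    have hz : (fun i => ((ψ (ns i) : Lp ℂ 2 σ) : B → ℂ) x) = fun _ => (0 : ℂ) :=
      funext fun i => hx2 _ hxΓ
    rw [hz] at hx1
    exact tendsto_nhds_unique hx1 tendsto_const_nhds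
  · -- S ⊆ closure D
    intro φ hφ
    have hφv : ∀ᵐ x ∂σ, x ∈ Γ₀ → (φ : B → ℂ) x = 0 := hφ
    rw [EMetric.mem_closure_iff]
    intro ε hε
    set m : ℝ≥0∞ := min ε 1 with hm
    have hm0 : m ≠ 0 := (lt_min hε zero_lt_one).ne'
    have hmtop : m ≠ ∞ := by simp [hm]
    have hmε : m / 2 < ε := lt_of_lt_of_le (ENNReal.half_lt_self hm0 hmtop) (min_le_left _ _)
    set η : ℝ≥0∞ := m / 4 with hη
    have hη0 : η ≠ 0 := by
      simp only [hη, ne_eq, ENNReal.div_eq_zero_iff]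
      push_neg
      exact ⟨hm0, by norm_num⟩
    have hηtop : η ≠ ∞ := by
      simp only [hη]
      exact (ENNReal.div_lt_top hmtop (by norm_num)).ne
    have hηη : η + η = m / 2 := by
      rw [hη, ENNReal.div_add_div_same]
      have h4 : (4 : ℝ≥0∞) = 2 * 2 := by norm_num
      rw [← two_mul, h4, ENNReal.mul_div_mul_left _ _ (by norm_num) (by norm_num)]
    obtain ⟨u, L, c, hLu, hbu, happ⟩ := exists_lip_approx σ φ hη0
    have hc0 : (0 : ℝ) ≤ c := le_trans (norm_nonneg _) (hbu 0)
    rcases Set.eq_empty_or_nonempty Γ₀ with hΓe | hΓne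
    · -- Γ₀ empty : use u itself
      have humem : MemLp (fun x : B => u x) 2 σ :=
        MemLp.of_bound ((hLu.continuous.comp continuous_subtype_val).aestronglyMeasurable) c
          (Filter.Eventually.of_forall fun x => hbu x)
      refine ⟨humem.toLp _, hlip u L hLu ⟨c, hbu⟩
        (fun x hx => by simp [hΓe] at hx) _ humem.coeFn_toLp, ?_⟩
      rw [Lp.edist_def]
      have heq : eLpNorm ((φ : B → ℂ) - (humem.toLp _ : B → ℂ)) 2 σ =
          eLpNorm ((φ : B → ℂ) - fun x : B => u x) 2 σ :=
        eLpNorm_congr_ae (EventuallyEq.sub (EventuallyEq.refl _ _) humem.coeFn_toLp)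
      rw [heq]
      calc eLpNorm ((φ : B → ℂ) - fun x : B => u x) 2 σ ≤ η := happ
        _ ≤ η + η := le_self_add
        _ = m / 2 := hηη
        _ < ε := hmε
    · -- Γ₀ nonempty : cutoff functions
      set K : Set (EuclideanSpace ℝ (Fin d)) := Subtype.val '' Γ₀ with hKdef
      have hKne : K.Nonempty := hΓne.image _
      have hKcl : IsClosed K := (hΓ₀.isCompact.image continuous_subtype_val).isClosed
      set θ : ℕ → EuclideanSpace ℝ (Fin d) → ℝ :=
        fun n z => min ((n : ℝ) * infDist z K) 1 with hθdef
      have hθlip : ∀ n : ℕ, LipschitzWith n (θ n) := by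
        intro n
        have hbase : LipschitzWith n (fun z => (n : ℝ) * infDist z K) := by
          apply LipschitzWith.of_dist_le_mul
          intro x y
          rw [Real.dist_eq, ← mul_sub, abs_mul, abs_of_nonneg (by positivity : (0:ℝ) ≤ (n:ℝ))]
          have h1 : |infDist x K - infDist y K| ≤ dist x y := by
            have := (lipschitz_infDist_pt K).dist_le_mul x y
            simpa [Real.dist_eq] using this
          calc (n : ℝ) * |infDist x K - infDist y K| ≤ (n : ℝ) * dist x y := by
                exact mul_le_mul_of_nonneg_left h1 (by positivity)
            _ = ((n : ℝ≥0) : ℝ) * dist x y := by push_cast; ring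
        exact hbase.min_const 1
      have hθ01 : ∀ n z, 0 ≤ θ n z ∧ θ n z ≤ 1 := fun n z =>
        ⟨le_min (mul_nonneg (Nat.cast_nonneg n) infDist_nonneg) zero_le_one, min_le_right _ _⟩
      have hθK : ∀ n (x : B), x ∈ Γ₀ → θ n (x : EuclideanSpace ℝ (Fin d)) = 0 := by
        intro n x hx
        have : infDist (x : EuclideanSpace ℝ (Fin d)) K = 0 :=
          infDist_zero_of_mem ⟨x, hx, rfl⟩
        simp [hθdef, this]
      -- the approximating functions
      set v : ℕ → EuclideanSpace ℝ (Fin d) → ℂ :=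
        fun n z => (θ n z : ℂ) * u z with hvdef
      have hθlipC : ∀ n : ℕ, LipschitzWith n (fun z => ((θ n z : ℝ) : ℂ)) :=
        fun n => Complex.isometry_ofReal.lipschitz.comp (hθlip n) |>.weaken (by simp)
      have hθbC : ∀ (n : ℕ) z, ‖((θ n z : ℝ) : ℂ)‖ ≤ (1 : ℝ) := by
        intro n z
        rw [Complex.norm_real, Real.norm_eq_abs, abs_of_nonneg (hθ01 n z).1]
        exact (hθ01 n z).2
      have hvlip : ∀ n : ℕ, LipschitzWith ((1:ℝ).toNNReal * L + c.toNNReal * n) (v n) :=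
        fun n => lipschitzWith_mul_of_bounded' (hθlipC n) hLu (hθbC n) hbu
      have hvb : ∀ (n : ℕ) z, ‖v n z‖ ≤ c := by
        intro n z
        rw [hvdef]
        simp only [norm_mul]
        calc ‖((θ n z : ℝ) : ℂ)‖ * ‖u z‖ ≤ 1 * c :=
              mul_le_mul (hθbC n z) (hbu z) (norm_nonneg _) zero_le_one
          _ = c := one_mul c
      have hvmem : ∀ n : ℕ, MemLp (fun x : B => v n x) 2 σ := fun n =>
        MemLp.of_bound (((hvlip n).continuous.comp continuous_subtype_val).aestronglyMeasurable)
          c (Filter.Eventually.of_forall fun x => hvb n x)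
      have hvD : ∀ n : ℕ, (hvmem n).toLp _ ∈ D := by
        intro n
        refine hlip (v n) _ (hvlip n) ⟨c, hvb n⟩ (fun x hx => ?_) _ (hvmem n).coeFn_toLp
        rw [hvdef]
        simp [hθK n x hx]
      -- the two error terms
      have hT1 : ∀ n : ℕ,
          eLpNorm (fun x : B => ((θ n (x : EuclideanSpace ℝ (Fin d)) : ℝ) : ℂ) *
            ((φ : B → ℂ) x - u x)) 2 σ ≤ η := by
        intro n
        refine le_trans (eLpNorm_mono fun x => ?_) happ
        rw [norm_mul]
        calc ‖((θ n (x : EuclideanSpace ℝ (Fin d)) : ℝ) : ℂ)‖ * ‖(φ : B → ℂ) x - u x‖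
            ≤ 1 * ‖(φ : B → ℂ) x - u x‖ :=
              mul_le_mul_of_nonneg_right (hθbC n _) (norm_nonneg _)
          _ = ‖((φ : B → ℂ) - fun x : B => u x) x‖ := by simp
      -- dominated convergence for the second term
      have hmeas2' : ∀ n : ℕ, AEStronglyMeasurable (fun x : B =>
          (1 - ((θ n (x : EuclideanSpace ℝ (Fin d)) : ℝ) : ℂ)) * (φ : B → ℂ) x) σ := by
        intro n
        refine AEStronglyMeasurable.mul ?_ (Lp.aestronglyMeasurable φ)
        exact (continuous_const.sub
          ((hθlipC n).continuous.comp continuous_subtype_val)).aestronglyMeasurable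
      have hT2 : ∀ᶠ n in atTop, eLpNorm (fun x : B =>
          (1 - ((θ n (x : EuclideanSpace ℝ (Fin d)) : ℝ) : ℂ)) * (φ : B → ℂ) x) 2 σ < η := by
        set F : ℕ → B → ℝ≥0∞ := fun n x =>
          (‖(1 - ((θ n (x : EuclideanSpace ℝ (Fin d)) : ℝ) : ℂ)) * (φ : B → ℂ) x‖₊ : ℝ≥0∞) ^ (2:ℝ)
          with hFdef
        have hnormle : ∀ (n : ℕ) (x : B),
            ‖(1 - ((θ n (x : EuclideanSpace ℝ (Fin d)) : ℝ) : ℂ)) * (φ : B → ℂ) x‖ ≤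
              ‖(φ : B → ℂ) x‖ := by
          intro n x
          rw [norm_mul]
          refine mul_le_of_le_one_left (norm_nonneg _) ?_
          have hcast : (1 : ℂ) - ((θ n (x : EuclideanSpace ℝ (Fin d)) : ℝ) : ℂ) =
              (((1 - θ n (x : EuclideanSpace ℝ (Fin d)) : ℝ)) : ℂ) := by push_cast; ring
          rw [hcast, Complex.norm_real, Real.norm_eq_abs,
            abs_of_nonneg (by linarith [(hθ01 n (x : EuclideanSpace ℝ (Fin d))).2])]
          linarith [(hθ01 n (x : EuclideanSpace ℝ (Fin d))).1]
        have hFmeas : ∀ n, AEMeasurable (F n) σ := fun n =>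
          ENNReal.continuous_rpow_const.measurable.comp_aemeasurable (hmeas2' n).enorm
        have hbound : ∀ n, F n ≤ᵐ[σ] fun x : B => (‖(φ : B → ℂ) x‖₊ : ℝ≥0∞) ^ (2:ℝ) := by
          intro n
          refine Filter.Eventually.of_forall fun x => ?_
          refine ENNReal.rpow_le_rpow ?_ (by norm_num)
          exact ENNReal.coe_le_coe.2 (NNReal.coe_le_coe.1 (by
            rw [coe_nnnorm, coe_nnnorm]; exact hnormle n x))
        have hfin : (∫⁻ x, (‖(φ : B → ℂ) x‖₊ : ℝ≥0∞) ^ (2:ℝ) ∂σ) ≠ ∞ := by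
          have := lintegral_rpow_enorm_lt_top_of_eLpNorm_lt_top (f := ((φ : Lp ℂ 2 σ) : B → ℂ))
            (p := 2) (by norm_num) (by norm_num) (Lp.eLpNorm_lt_top φ)
          simpa [ENNReal.toReal_ofNat, enorm_eq_nnnorm] using this.ne
        have hlim : ∀ᵐ x ∂σ, Tendsto (fun n => F n x) atTop (𝓝 ((fun _ : B => (0:ℝ≥0∞)) x)) := by
          filter_upwards [hφv] with x hx
          by_cases hxΓ : x ∈ Γ₀
          · have hz : ∀ n, F n x = 0 := by
              intro n
              rw [hFdef]
              simp only [hx hxΓ, mul_zero, nnnorm_zero, ENNReal.coe_zero]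
              exact ENNReal.zero_rpow_of_pos (by norm_num)
            simpa [hz] using (tendsto_const_nhds :
              Tendsto (fun _ : ℕ => (0:ℝ≥0∞)) atTop (𝓝 0))
          · have hxK : (x : EuclideanSpace ℝ (Fin d)) ∉ K := by
              rintro ⟨y, hy, hyx⟩
              exact hxΓ (Subtype.ext hyx ▸ hy)
            have hr : 0 < infDist (x : EuclideanSpace ℝ (Fin d)) K :=
              (hKcl.notMem_iff_infDist_pos hKne).1 hxK
            obtain ⟨N, hN⟩ := exists_nat_ge (1 / infDist (x : EuclideanSpace ℝ (Fin d)) K)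
            refine Tendsto.congr' ?_ tendsto_const_nhds
            filter_upwards [eventually_ge_atTop N] with n hn
            have h1r : 1 ≤ (n : ℝ) * infDist (x : EuclideanSpace ℝ (Fin d)) K := by
              have h2 := hN.trans (Nat.cast_le.2 hn : (N:ℝ) ≤ n)
              rwa [div_le_iff₀ hr] at h2
            have hθ1 : θ n (x : EuclideanSpace ℝ (Fin d)) = 1 := min_eq_right h1r
            rw [hFdef]
            simp only [hθ1, Complex.ofReal_one, sub_self, zero_mul, nnnorm_zero,
              ENNReal.coe_zero]
            exact (ENNReal.zero_rpow_of_pos (by norm_num)).symm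
        have hDCT := tendsto_lintegral_of_dominated_convergence'
          (fun x : B => (‖(φ : B → ℂ) x‖₊ : ℝ≥0∞) ^ (2:ℝ)) hFmeas hbound hfin hlim
        rw [lintegral_zero] at hDCT
        have hη2pos : (0:ℝ≥0∞) < η ^ (2:ℝ) :=
          ENNReal.rpow_pos (pos_iff_ne_zero.2 hη0) hηtop
        filter_upwards [hDCT.eventually_lt_const hη2pos] with n hn
        have hrepr : eLpNorm (fun x : B =>
            (1 - ((θ n (x : EuclideanSpace ℝ (Fin d)) : ℝ) : ℂ)) * (φ : B → ℂ) x) 2 σ =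
            (∫⁻ x, F n x ∂σ) ^ ((1:ℝ)/2) := by
          rw [eLpNorm_eq_lintegral_rpow_enorm_toReal (by norm_num) (by norm_num)]
          simp [hFdef, ENNReal.toReal_ofNat, enorm_eq_nnnorm]
        rw [hrepr]
        calc (∫⁻ x, F n x ∂σ) ^ ((1:ℝ)/2) < (η ^ (2:ℝ)) ^ ((1:ℝ)/2) :=
              ENNReal.rpow_lt_rpow hn (by norm_num)
          _ = η := by
              rw [← ENNReal.rpow_mul]
              norm_num
      obtain ⟨n, hn⟩ := hT2.exists
      refine ⟨(hvmem n).toLp _, hvD n, ?_⟩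
      rw [Lp.edist_def]
      have heq : eLpNorm ((φ : B → ℂ) - ((hvmem n).toLp _ : B → ℂ)) 2 σ =
          eLpNorm ((φ : B → ℂ) - fun x : B => v n x) 2 σ :=
        eLpNorm_congr_ae (EventuallyEq.sub (EventuallyEq.refl _ _) (hvmem n).coeFn_toLp)
      rw [heq]
      have hsplit : ((φ : B → ℂ) - fun x : B => v n x) =
          (fun x : B => ((θ n (x : EuclideanSpace ℝ (Fin d)) : ℝ) : ℂ) *
            ((φ : B → ℂ) x - u x)) +
          (fun x : B => (1 - ((θ n (x : EuclideanSpace ℝ (Fin d)) : ℝ) : ℂ)) *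
            (φ : B → ℂ) x) := by
        funext x
        simp only [Pi.sub_apply, Pi.add_apply, hvdef]
        ring
      rw [hsplit]
      have hmeas1 : AEStronglyMeasurable (fun x : B =>
          ((θ n (x : EuclideanSpace ℝ (Fin d)) : ℝ) : ℂ) * ((φ : B → ℂ) x - u x)) σ :=
        (((hθlipC n).continuous.comp continuous_subtype_val).aestronglyMeasurable).mul
          ((Lp.aestronglyMeasurable φ).sub
            ((hLu.continuous.comp continuous_subtype_val).aestronglyMeasurable))
      have hmeas2 : AEStronglyMeasurable (fun x : B =>
          (1 - ((θ n (x : EuclideanSpace ℝ (Fin d)) : ℝ) : ℂ)) * (φ : B → ℂ) x) σ := by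
        refine AEStronglyMeasurable.mul ?_ (Lp.aestronglyMeasurable φ)
        exact (continuous_const.sub
          ((hθlipC n).continuous.comp continuous_subtype_val)).aestronglyMeasurable
      calc eLpNorm _ 2 σ ≤ _ + _ := eLpNorm_add_le hmeas1 hmeas2 (by norm_num)
        _ ≤ η + η := add_le_add (hT1 n) hn.le
        _ = m / 2 := hηη
        _ < ε := hmε
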